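/- Suppose u = u(t,x) solves the Klein–Gordon equation □u + u = F on (0,∞) × ℝ³, with u of class C². Then for all t > 0 and x ∈ ℝ³ with r = |x|: (⟨t+r⟩/⟨t−r⟩) |u(t,x)| ≲ |∂Γ^{≤1}u(t,x)| + (⟨t+r⟩/⟨t−r⟩) |F(t,x)|. -/

import Mathlib

open Real MeasureTheory

/-- Partial derivative in the `j`-th space-time coordinate (`0` = time, `1,2,3` = space). -/
noncomputable def pd (j : Fin 4) (U : (Fin 4 → ℝ) → ℝ) : (Fin 4 → ℝ) → ℝ :=
  fun z => fderiv ℝ U z (Pi.single j 1)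

/-- Spatial Laplacian. -/
noncomputable def lap (U : (Fin 4 → ℝ) → ℝ) : (Fin 4 → ℝ) → ℝ :=
  fun z => ∑ i : Fin 3, pd i.succ (pd i.succ U) z

/-- The d'Alembertian `□ = ∂_tt − Δ`. -/
noncomputable def box (U : (Fin 4 → ℝ) → ℝ) : (Fin 4 → ℝ) → ℝ :=
  fun z => pd 0 (pd 0 U) z - lap U z

/-- The spatial radius `r = |x|`. -/
noncomputable def rad (z : Fin 4 → ℝ) : ℝ := Real.sqrt (∑ i : Fin 3, (z i.succ)^2)

/-- Lorentz boost `Ω_{i0} = t∂_i + x_i ∂_t`. -/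
noncomputable def boost (i : Fin 3) (U : (Fin 4 → ℝ) → ℝ) : (Fin 4 → ℝ) → ℝ :=
  fun z => z 0 * pd i.succ U z + z i.succ * pd 0 U z

/-- Rotation `Ω_{ij} = x_i∂_j − x_j∂_i`. -/
noncomputable def rot (i j : Fin 3) (U : (Fin 4 → ℝ) → ℝ) : (Fin 4 → ℝ) → ℝ :=
  fun z => z i.succ * pd j.succ U z - z j.succ * pd i.succ U z

/-- Radial derivative `∂_r = (x/r)·∇`. -/
noncomputable def dr (U : (Fin 4 → ℝ) → ℝ) : (Fin 4 → ℝ) → ℝ :=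
  fun z => ∑ i : Fin 3, (z i.succ / rad z) * pd i.succ U z

/-- Japanese bracket `⟨s⟩ = √(1+s²)`. -/
noncomputable def jb (s : ℝ) : ℝ := Real.sqrt (1 + s^2)

/-- The eleven operators `Γ^{≤1}`: identity, `∂_t`, `∂_i`, boosts, rotations. -/
noncomputable def gam : Fin 11 → ((Fin 4 → ℝ) → ℝ) → ((Fin 4 → ℝ) → ℝ) :=
  ![id, pd 0, pd 1, pd 2, pd 3, boost 0, boost 1, boost 2, rot 0 1, rot 0 2, rot 1 2]

/-- `|∂Γ^{≤1}u|`: the ℓ² norm of all space-time first derivatives of all `Γ^{≤1}u`. -/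
noncomputable def dGam (U : (Fin 4 → ℝ) → ℝ) (z : Fin 4 → ℝ) : ℝ :=
  Real.sqrt (∑ a : Fin 4, ∑ k : Fin 11, (pd a (gam k U) z)^2)

/- ### Auxiliary lemmas -/

lemma KGaux.openS : IsOpen {z : Fin 4 → ℝ | 0 < z 0} :=
  isOpen_lt continuous_const (continuous_apply 0)

lemma KGaux.hasFDerivAt_pd {U : (Fin 4 → ℝ) → ℝ}
    (hU : ContDiffOn ℝ 2 U {z : Fin 4 → ℝ | 0 < z 0})
    {z : Fin 4 → ℝ} (hz : 0 < z 0) (b : Fin 4) :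
    HasFDerivAt (pd b U) ((fderiv ℝ (fderiv ℝ U) z).flip (Pi.single b 1)) z := by
  have h1 : ContDiffOn ℝ 1 (fderiv ℝ U) {z : Fin 4 → ℝ | 0 < z 0} :=
    hU.fderiv_of_isOpen KGaux.openS (by norm_num)
  have h2 : DifferentiableAt ℝ (fderiv ℝ U) z :=
    (h1.contDiffAt (KGaux.openS.mem_nhds hz)).differentiableAt (by norm_num)
  have h3 : HasFDerivAt (fun y => fderiv ℝ U y (Pi.single b 1))
      ((fderiv ℝ (fderiv ℝ U) z).flip (Pi.single b 1)) z := by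
    simpa using h2.hasFDerivAt.clm_apply (hasFDerivAt_const (Pi.single b (1:ℝ)) z)
  exact h3

lemma KGaux.pd_pd {U : (Fin 4 → ℝ) → ℝ}
    (hU : ContDiffOn ℝ 2 U {z : Fin 4 → ℝ | 0 < z 0})
    {z : Fin 4 → ℝ} (hz : 0 < z 0) (a b : Fin 4) :
    pd a (pd b U) z = fderiv ℝ (fderiv ℝ U) z (Pi.single a 1) (Pi.single b 1) := by
  show fderiv ℝ (pd b U) z (Pi.single a 1) = _
  rw [(KGaux.hasFDerivAt_pd hU hz b).fderiv]
  rfl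

lemma KGaux.pd_symm {U : (Fin 4 → ℝ) → ℝ}
    (hU : ContDiffOn ℝ 2 U {z : Fin 4 → ℝ | 0 < z 0})
    {z : Fin 4 → ℝ} (hz : 0 < z 0) (a b : Fin 4) :
    pd a (pd b U) z = pd b (pd a U) z := by
  rw [KGaux.pd_pd hU hz, KGaux.pd_pd hU hz]
  exact (hU.contDiffAt (KGaux.openS.mem_nhds hz)).isSymmSndFDerivAt (by simp) _ _

lemma KGaux.pd_boost {U : (Fin 4 → ℝ) → ℝ}
    (hU : ContDiffOn ℝ 2 U {z : Fin 4 → ℝ | 0 < z 0})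
    {z : Fin 4 → ℝ} (hz : 0 < z 0) (i : Fin 3) (a : Fin 4) :
    pd a (boost i U) z = (Pi.single a 1 : Fin 4 → ℝ) 0 * pd i.succ U z
      + z 0 * pd a (pd i.succ U) z + (Pi.single a 1 : Fin 4 → ℝ) i.succ * pd 0 U z
      + z i.succ * pd a (pd 0 U) z := by
  have h0 : HasFDerivAt (fun y : Fin 4 → ℝ => y 0)
      (ContinuousLinearMap.proj (R := ℝ) (φ := fun _ : Fin 4 => ℝ) 0) z :=
    hasFDerivAt_apply 0 z
  have hi : HasFDerivAt (fun y : Fin 4 → ℝ => y i.succ)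
      (ContinuousLinearMap.proj (R := ℝ) (φ := fun _ : Fin 4 => ℝ) i.succ) z :=
    hasFDerivAt_apply i.succ z
  have hA := (h0.mul (KGaux.hasFDerivAt_pd hU hz i.succ)).add
    (hi.mul (KGaux.hasFDerivAt_pd hU hz 0))
  have hB : pd a (boost i U) z = _ := congrArg (fun L => L (Pi.single a (1:ℝ)))
    (show fderiv ℝ (boost i U) z = _ from hA.fderiv)
  rw [hB]
  simp only [ContinuousLinearMap.add_apply, ContinuousLinearMap.smul_apply,
    ContinuousLinearMap.flip_apply, ContinuousLinearMap.proj_apply, smul_eq_mul,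
    ← KGaux.pd_pd hU hz]
  ring

lemma KGaux.comp_le (U : (Fin 4 → ℝ) → ℝ) (z : Fin 4 → ℝ) (a : Fin 4) (k : Fin 11) :
    |pd a (gam k U) z| ≤ dGam U z := by
  rw [dGam, ← Real.sqrt_sq_eq_abs]
  apply Real.sqrt_le_sqrt
  have h1 : (pd a (gam k U) z)^2 ≤ ∑ k' : Fin 11, (pd a (gam k' U) z)^2 :=
    Finset.single_le_sum (f := fun k' => (pd a (gam k' U) z)^2)
      (fun j _ => sq_nonneg _) (Finset.mem_univ k)
  exact h1.trans (Finset.single_le_sum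
    (f := fun a' => ∑ k' : Fin 11, (pd a' (gam k' U) z)^2)
    (fun j _ => Finset.sum_nonneg fun _ _ => sq_nonneg _) (Finset.mem_univ a))

lemma KGaux.jb_pos (s : ℝ) : 0 < jb s := Real.sqrt_pos.2 (by positivity)

lemma KGaux.jb_sq (s : ℝ) : jb s ^ 2 = 1 + s ^ 2 := Real.sq_sqrt (by positivity)

lemma KGaux.one_le_jb (s : ℝ) : 1 ≤ jb s := by
  nlinarith [KGaux.jb_sq s, KGaux.jb_pos s]

lemma KGaux.abs_le_jb (s : ℝ) : |s| ≤ jb s := by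
  nlinarith [KGaux.jb_sq s, KGaux.jb_pos s, sq_abs s, abs_nonneg s]

lemma KGaux.le_jb (s : ℝ) : s ≤ jb s := (le_abs_self s).trans (KGaux.abs_le_jb s)

lemma KGaux.jb_le (s : ℝ) (h : 0 ≤ s) : jb s ≤ 1 + s := by
  nlinarith [KGaux.jb_sq s, KGaux.jb_pos s]

set_option maxHeartbeats 2000000 in
/-- **Pointwise Klein–Gordon weight estimate** (Lemma 2.7): if `□u + u = F` on
`(0,∞) × ℝ³` with `u` of class `C²`, then for `t > 0`:
`(⟨t+r⟩/⟨t−r⟩)|u| ≲ |∂Γ^{≤1}u| + (⟨t+r⟩/⟨t−r⟩)|F|`, absolute constant. -/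
theorem kleinGordon_weight_estimate :
    ∃ C > 0, ∀ U F : (Fin 4 → ℝ) → ℝ,
      ContDiffOn ℝ 2 U {z : Fin 4 → ℝ | 0 < z 0} →
      (∀ z : Fin 4 → ℝ, 0 < z 0 → box U z + U z = F z) →
      ∀ z : Fin 4 → ℝ, 0 < z 0 →
        (jb (z 0 + rad z) / jb (z 0 - rad z)) * |U z|
          ≤ C * (dGam U z + (jb (z 0 + rad z) / jb (z 0 - rad z)) * |F z|) := by
  refine ⟨200, by norm_num, ?_⟩
  intro U F hU heq z hz
  have hs0 : ((0:Fin 3).succ) = (1:Fin 4) := rfl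
  have hs1 : ((1:Fin 3).succ) = (2:Fin 4) := rfl
  have hs2 : ((2:Fin 3).succ) = (3:Fin 4) := rfl
  set t := z 0 with ht
  set r := rad z with hr
  set G := dGam U z with hGdef
  set P := jb (t + r) with hPdef
  set Q := jb (t - r) with hQdef
  have hG0 : 0 ≤ G := Real.sqrt_nonneg _
  have hQ0 : 0 < Q := KGaux.jb_pos _
  have hP0 : 0 < P := KGaux.jb_pos _
  have hr0 : 0 ≤ r := Real.sqrt_nonneg _
  -- r^2 = x1^2 + x2^2 + x3^2
  have hr2 : r ^ 2 = (z 1) ^ 2 + (z 2) ^ 2 + (z 3) ^ 2 := by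
    rw [hr, rad, Real.sq_sqrt (Finset.sum_nonneg fun _ _ => sq_nonneg _),
      Fin.sum_univ_three, hs0, hs1, hs2]
  -- component bounds
  have hid : ∀ a : Fin 4, |pd a U z| ≤ G := by
    intro a
    have h := KGaux.comp_le U z a 0
    simpa [gam] using h
  have hD : ∀ a b : Fin 4, |pd a (pd b U) z| ≤ G := by
    intro a b
    fin_cases b
    · exact KGaux.comp_le U z a 1
    · exact KGaux.comp_le U z a 2
    · exact KGaux.comp_le U z a 3
    · exact KGaux.comp_le U z a 4
  have hB : ∀ (a : Fin 4) (i : Fin 3), |pd a (boost i U) z| ≤ G := by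
    intro a i
    fin_cases i
    · exact KGaux.comp_le U z a 5
    · exact KGaux.comp_le U z a 6
    · exact KGaux.comp_le U z a 7
  -- box expansion
  have hboxd : box U z = pd 0 (pd 0 U) z
      - (pd 1 (pd 1 U) z + pd 2 (pd 2 U) z + pd 3 (pd 3 U) z) := by
    rw [box, lap, Fin.sum_univ_three, hs0, hs1, hs2]
  have hboxle : |box U z| ≤ 4 * G := by
    rw [hboxd]
    have h0 := hD 0 0; have h1 := hD 1 1; have h2 := hD 2 2; have h3 := hD 3 3
    have ha := abs_sub (pd 0 (pd 0 U) z) (pd 1 (pd 1 U) z + pd 2 (pd 2 U) z + pd 3 (pd 3 U) z)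
    have hb' := abs_add_three (pd 1 (pd 1 U) z) (pd 2 (pd 2 U) z) (pd 3 (pd 3 U) z)
    linarith only [h0, h1, h2, h3, ha, hb']
  -- It suffices to bound the weighted box
  suffices hwb : P / Q * |box U z| ≤ 200 * G by
    have hUeq : U z = F z - box U z := by have := heq z hz; linarith
    have hUle : |U z| ≤ |F z| + |box U z| := by rw [hUeq]; exact abs_sub _ _
    have hw0 : 0 ≤ P / Q := div_nonneg hP0.le hQ0.le
    have h1 : P / Q * |U z| ≤ P / Q * |F z| + P / Q * |box U z| := by
      have := mul_le_mul_of_nonneg_left hUle hw0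
      rw [mul_add] at this
      exact this
    have h2 : 0 ≤ P / Q * |F z| := mul_nonneg hw0 (abs_nonneg _)
    linarith only [h1, hwb, h2, hG0]
  by_cases hcase : P ≤ 4 * Q
  · -- easy region: weight is bounded by 4
    have hw4 : P / Q ≤ 4 := by rw [div_le_iff₀ hQ0]; linarith
    have hw0 : 0 ≤ P / Q := div_nonneg hP0.le hQ0.le
    have hm1 : P / Q * |box U z| ≤ P / Q * (4 * G) := mul_le_mul_of_nonneg_left hboxle hw0
    have hm2 : P / Q * (4 * G) ≤ 4 * (4 * G) :=
      mul_le_mul_of_nonneg_right hw4 (by positivity)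
    linarith only [hm1, hm2, hG0]
  · -- hard region: r ≈ t, use the boost identities
    push_neg at hcase
    have h16 : 16 * Q ^ 2 < P ^ 2 := by
      nlinarith only [hcase, hQ0, hP0, mul_pos (show (0:ℝ) < P - 4 * Q by linarith only [hcase])
        (show (0:ℝ) < P + 4 * Q by linarith only [hcase, hQ0])]
    have hPs : P ^ 2 = 1 + (t + r) ^ 2 := KGaux.jb_sq _
    have hQs : Q ^ 2 = 1 + (t - r) ^ 2 := KGaux.jb_sq _
    have htr0 : 0 ≤ t + r := by linarith [hz]
    have htr1 : 1 ≤ t + r := by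
      nlinarith only [h16, hPs, hQs, sq_nonneg (t - r), htr0]
    have h15 : 16 * (t - r) ^ 2 < (t + r) ^ 2 := by
      have hA : 16 * (1 + (t - r) ^ 2) < 1 + (t + r) ^ 2 := by
        calc 16 * (1 + (t - r) ^ 2) = 16 * Q ^ 2 := by rw [hQs]
          _ < P ^ 2 := h16
          _ = 1 + (t + r) ^ 2 := hPs
      linarith
    have h38t : 3 * (t + r) ≤ 8 * t := by
      by_contra hcon
      push_neg at hcon
      have hf1 : (0:ℝ) < 3 * r - 5 * t := by linarith
      have hf2 : (0:ℝ) < 5 * r - 3 * t := by linarith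
      nlinarith only [h15, mul_pos hf1 hf2]
    have h38r : 3 * (t + r) ≤ 8 * r := by
      by_contra hcon
      push_neg at hcon
      have hf1 : (0:ℝ) < 3 * t - 5 * r := by linarith
      have hf2 : (0:ℝ) < 5 * t - 3 * r := by linarith
      nlinarith only [h15, mul_pos hf1 hf2]
    have hrpos : 0 < r := by linarith
    have htpos : 0 < t := hz
    have hPle : P ≤ 2 * (t + r) := by
      have := KGaux.jb_le (t + r) htr0
      linarith
    have htrP : t + r ≤ P := KGaux.le_jb _
    have habsQ : |t - r| ≤ Q := KGaux.abs_le_jb _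
    -- bounds |x_i| ≤ r
    have hx : ∀ j : Fin 4, (z j)^2 ≤ r^2 → |z j| ≤ r := by
      intro j hj
      have := Real.sqrt_le_sqrt hj
      rwa [Real.sqrt_sq_eq_abs, Real.sqrt_sq hr0] at this
    have hx1 : |z 1| ≤ r := hx 1 (by linarith only [hr2, sq_nonneg (z 2), sq_nonneg (z 3)])
    have hx2 : |z 2| ≤ r := hx 2 (by linarith only [hr2, sq_nonneg (z 1), sq_nonneg (z 3)])
    have hx3 : |z 3| ≤ r := hx 3 (by linarith only [hr2, sq_nonneg (z 1), sq_nonneg (z 2)])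
    -- the boost identities
    have hb := KGaux.pd_boost hU hz
    have e11 : pd 0 (boost 0 U) z = pd 1 U z + t * pd 0 (pd 1 U) z
        + z 1 * pd 0 (pd 0 U) z := by
      have h := hb 0 0
      rw [hs0] at h
      simpa using h
    have e12 : pd 0 (boost 1 U) z = pd 2 U z + t * pd 0 (pd 2 U) z
        + z 2 * pd 0 (pd 0 U) z := by
      have h := hb 1 0
      rw [hs1] at h
      simpa using h
    have e13 : pd 0 (boost 2 U) z = pd 3 U z + t * pd 0 (pd 3 U) z
        + z 3 * pd 0 (pd 0 U) z := by
      have h := hb 2 0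
      rw [hs2] at h
      simpa using h
    have e21 : pd 1 (boost 0 U) z = t * pd 1 (pd 1 U) z + pd 0 U z
        + z 1 * pd 1 (pd 0 U) z := by
      have h := hb 0 1
      rw [hs0] at h
      simpa using h
    have e22 : pd 2 (boost 1 U) z = t * pd 2 (pd 2 U) z + pd 0 U z
        + z 2 * pd 2 (pd 0 U) z := by
      have h := hb 1 2
      rw [hs1] at h
      simpa using h
    have e23 : pd 3 (boost 2 U) z = t * pd 3 (pd 3 U) z + pd 0 U z
        + z 3 * pd 3 (pd 0 U) z := by
      have h := hb 2 3
      rw [hs2] at h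
      simpa using h
    have sy1 : pd 0 (pd 1 U) z = pd 1 (pd 0 U) z := KGaux.pd_symm hU hz 0 1
    have sy2 : pd 0 (pd 2 U) z = pd 2 (pd 0 U) z := KGaux.pd_symm hU hz 0 2
    have sy3 : pd 0 (pd 3 U) z = pd 3 (pd 0 U) z := KGaux.pd_symm hU hz 0 3
    -- the key algebraic identity
    have hE : r ^ 2 * (t * box U z) =
        t * (z 1 * pd 0 (boost 0 U) z + z 2 * pd 0 (boost 1 U) z + z 3 * pd 0 (boost 2 U) z)
        - t * (z 1 * pd 1 U z + z 2 * pd 2 U z + z 3 * pd 3 U z)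
        - r ^ 2 * (pd 1 (boost 0 U) z + pd 2 (boost 1 U) z + pd 3 (boost 2 U) z)
        + 3 * (r ^ 2 * pd 0 U z)
        + (r ^ 2 - t ^ 2) * (z 1 * pd 1 (pd 0 U) z + z 2 * pd 2 (pd 0 U) z
            + z 3 * pd 3 (pd 0 U) z) := by
      rw [hboxd, e11, e12, e13, e21, e22, e23, sy1, sy2, sy3, hr2]
      ring
    -- term bounds
    have hS1 : |z 1 * pd 0 (boost 0 U) z + z 2 * pd 0 (boost 1 U) z
        + z 3 * pd 0 (boost 2 U) z| ≤ 3 * (r * G) := by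
      have t1 : |z 1 * pd 0 (boost 0 U) z| ≤ r * G := by
        rw [abs_mul]; exact mul_le_mul hx1 (hB 0 0) (abs_nonneg _) hr0
      have t2 : |z 2 * pd 0 (boost 1 U) z| ≤ r * G := by
        rw [abs_mul]; exact mul_le_mul hx2 (hB 0 1) (abs_nonneg _) hr0
      have t3 : |z 3 * pd 0 (boost 2 U) z| ≤ r * G := by
        rw [abs_mul]; exact mul_le_mul hx3 (hB 0 2) (abs_nonneg _) hr0
      have ht0 := abs_add_three (z 1 * pd 0 (boost 0 U) z) (z 2 * pd 0 (boost 1 U) z)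
        (z 3 * pd 0 (boost 2 U) z)
      linarith only [ht0, t1, t2, t3]
    have hS2 : |z 1 * pd 1 U z + z 2 * pd 2 U z + z 3 * pd 3 U z| ≤ 3 * (r * G) := by
      have t1 : |z 1 * pd 1 U z| ≤ r * G := by
        rw [abs_mul]; exact mul_le_mul hx1 (hid 1) (abs_nonneg _) hr0
      have t2 : |z 2 * pd 2 U z| ≤ r * G := by
        rw [abs_mul]; exact mul_le_mul hx2 (hid 2) (abs_nonneg _) hr0
      have t3 : |z 3 * pd 3 U z| ≤ r * G := by
        rw [abs_mul]; exact mul_le_mul hx3 (hid 3) (abs_nonneg _) hr0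
      have ht0 := abs_add_three (z 1 * pd 1 U z) (z 2 * pd 2 U z) (z 3 * pd 3 U z)
      linarith only [ht0, t1, t2, t3]
    have hS3 : |pd 1 (boost 0 U) z + pd 2 (boost 1 U) z + pd 3 (boost 2 U) z| ≤ 3 * G := by
      have ht0 := abs_add_three (pd 1 (boost 0 U) z) (pd 2 (boost 1 U) z) (pd 3 (boost 2 U) z)
      have ht1 := hB 1 0; have ht2 := hB 2 1; have ht3 := hB 3 2
      linarith only [ht0, ht1, ht2, ht3]
    have hS4 : |z 1 * pd 1 (pd 0 U) z + z 2 * pd 2 (pd 0 U) z + z 3 * pd 3 (pd 0 U) z|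
        ≤ 3 * (r * G) := by
      have t1 : |z 1 * pd 1 (pd 0 U) z| ≤ r * G := by
        rw [abs_mul]; exact mul_le_mul hx1 (hD 1 0) (abs_nonneg _) hr0
      have t2 : |z 2 * pd 2 (pd 0 U) z| ≤ r * G := by
        rw [abs_mul]; exact mul_le_mul hx2 (hD 2 0) (abs_nonneg _) hr0
      have t3 : |z 3 * pd 3 (pd 0 U) z| ≤ r * G := by
        rw [abs_mul]; exact mul_le_mul hx3 (hD 3 0) (abs_nonneg _) hr0
      have ht0 := abs_add_three (z 1 * pd 1 (pd 0 U) z) (z 2 * pd 2 (pd 0 U) z)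
        (z 3 * pd 3 (pd 0 U) z)
      linarith only [ht0, t1, t2, t3]
    have hrt : |r ^ 2 - t ^ 2| ≤ Q * P := by
      have h := abs_mul (r - t) (r + t)
      have h2 : |r - t| ≤ Q := by rw [abs_sub_comm]; exact habsQ
      have h3 : |r + t| ≤ P := by
        rw [abs_of_nonneg (by linarith : (0:ℝ) ≤ r + t)]
        linarith [htrP]
      calc |r ^ 2 - t ^ 2| = |r - t| * |r + t| := by rw [← abs_mul]; ring_nf
        _ ≤ Q * P := mul_le_mul h2 h3 (abs_nonneg _) hQ0.le
    -- assemble: bound on t * r^2 * |box|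
    have hbig : t * r ^ 2 * |box U z| ≤ t * (3 * (r * G)) + t * (3 * (r * G))
        + r ^ 2 * (3 * G) + 3 * (r ^ 2 * G) + Q * P * (3 * (r * G)) := by
      have h1 : t * r ^ 2 * |box U z| = |r ^ 2 * (t * box U z)| := by
        rw [abs_mul, abs_mul, abs_of_nonneg (sq_nonneg r), abs_of_nonneg htpos.le]
        ring
      rw [h1, hE]
      have A1 : |t * (z 1 * pd 0 (boost 0 U) z + z 2 * pd 0 (boost 1 U) z
          + z 3 * pd 0 (boost 2 U) z)| ≤ t * (3 * (r * G)) := by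
        rw [abs_mul, abs_of_nonneg htpos.le]
        exact mul_le_mul_of_nonneg_left hS1 htpos.le
      have A2 : |t * (z 1 * pd 1 U z + z 2 * pd 2 U z + z 3 * pd 3 U z)|
          ≤ t * (3 * (r * G)) := by
        rw [abs_mul, abs_of_nonneg htpos.le]
        exact mul_le_mul_of_nonneg_left hS2 htpos.le
      have A3 : |r ^ 2 * (pd 1 (boost 0 U) z + pd 2 (boost 1 U) z + pd 3 (boost 2 U) z)|
          ≤ r ^ 2 * (3 * G) := by
        rw [abs_mul, abs_of_nonneg (sq_nonneg r)]
        exact mul_le_mul_of_nonneg_left hS3 (sq_nonneg r)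
      have A4 : |3 * (r ^ 2 * pd 0 U z)| ≤ 3 * (r ^ 2 * G) := by
        rw [abs_mul, abs_mul, abs_of_nonneg (sq_nonneg r)]
        have := hid 0
        have : r ^ 2 * |pd 0 U z| ≤ r ^ 2 * G :=
          mul_le_mul_of_nonneg_left (hid 0) (sq_nonneg r)
        simp only [Nat.abs_ofNat]
        linarith
      have A5 : |(r ^ 2 - t ^ 2) * (z 1 * pd 1 (pd 0 U) z + z 2 * pd 2 (pd 0 U) z
          + z 3 * pd 3 (pd 0 U) z)| ≤ Q * P * (3 * (r * G)) := by
        rw [abs_mul]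
        exact mul_le_mul hrt hS4 (abs_nonneg _) (by positivity)
      set a1 := t * (z 1 * pd 0 (boost 0 U) z + z 2 * pd 0 (boost 1 U) z
        + z 3 * pd 0 (boost 2 U) z)
      set a2 := t * (z 1 * pd 1 U z + z 2 * pd 2 U z + z 3 * pd 3 U z)
      set a3 := r ^ 2 * (pd 1 (boost 0 U) z + pd 2 (boost 1 U) z + pd 3 (boost 2 U) z)
      set a4 := 3 * (r ^ 2 * pd 0 U z)
      set a5 := (r ^ 2 - t ^ 2) * (z 1 * pd 1 (pd 0 U) z + z 2 * pd 2 (pd 0 U) z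
        + z 3 * pd 3 (pd 0 U) z)
      have tri : |a1 - a2 - a3 + a4 + a5| ≤ |a1| + |a2| + |a3| + |a4| + |a5| := by
        calc |a1 - a2 - a3 + a4 + a5| ≤ |a1 - a2 - a3 + a4| + |a5| := abs_add_le _ _
          _ ≤ (|a1 - a2 - a3| + |a4|) + |a5| := by
              linarith only [abs_add_le (a1 - a2 - a3) a4]
          _ ≤ ((|a1 - a2| + |a3|) + |a4|) + |a5| := by
              linarith only [abs_sub (a1 - a2) a3]
          _ ≤ |a1| + |a2| + |a3| + |a4| + |a5| := by linarith only [abs_sub a1 a2]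
      linarith only [tri, A1, A2, A3, A4, A5]
    -- coefficient inequality
    have hP16r : 3 * P ≤ 16 * r := by linarith
    have hP16t : 3 * P ≤ 16 * t := by linarith
    have h9 : 9 * (t + r) ^ 2 ≤ 64 * (t * r) := by
      nlinarith only [mul_nonneg (show (0:ℝ) ≤ 8*t - 3*(t+r) by linarith only [h38t])
        (show (0:ℝ) ≤ 8*r - 3*(t+r) by linarith only [h38r]), sq_nonneg (t + r)]
    have hP2 : P ^ 2 ≤ 4 * (t + r) ^ 2 := by
      nlinarith only [mul_self_le_mul_self hP0.le hPle]
    have hcoef : P * (6 * (t * r) + 6 * r ^ 2 + 3 * (Q * P) * r) ≤ 200 * (Q * (t * r ^ 2)) := by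
      have hQ1 : 1 ≤ Q := KGaux.one_le_jb _
      have b1 : P * (6 * (t * r)) ≤ 32 * (t * r ^ 2) := by
        nlinarith only [mul_le_mul_of_nonneg_left hP16r
          (show (0:ℝ) ≤ 2 * (t * r) by positivity)]
      have b2 : P * (6 * r ^ 2) ≤ 32 * (t * r ^ 2) := by
        nlinarith only [mul_le_mul_of_nonneg_left hP16t
          (show (0:ℝ) ≤ 2 * r ^ 2 by positivity)]
      have b3 : P * (3 * (Q * P) * r) ≤ 86 * (Q * (t * r ^ 2)) := by
        have c1 : 3 * (Q * r) * P ^ 2 ≤ 3 * (Q * r) * (4 * (t + r) ^ 2) :=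
          mul_le_mul_of_nonneg_left hP2 (by positivity)
        have c2 : (4 / 3 : ℝ) * (Q * r) * (9 * (t + r) ^ 2)
            ≤ (4 / 3 : ℝ) * (Q * r) * (64 * (t * r)) :=
          mul_le_mul_of_nonneg_left h9 (by positivity)
        nlinarith only [c1, c2, mul_pos (mul_pos hQ0 htpos) (mul_pos hrpos hrpos)]
      nlinarith only [b1, b2, b3, mul_pos (mul_pos hQ0 htpos) (mul_pos hrpos hrpos),
        mul_le_mul_of_nonneg_left hQ1 (show (0:ℝ) ≤ 64 * (t * r^2) by positivity)]
    -- conclude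
    have hfin : P * |box U z| * (t * r ^ 2) ≤ 200 * (Q * G) * (t * r ^ 2) := by
      have h1 : P * |box U z| * (t * r ^ 2) = P * (t * r ^ 2 * |box U z|) := by ring
      have h2 := mul_le_mul_of_nonneg_left hbig hP0.le
      have h3 : P * (t * (3 * (r * G)) + t * (3 * (r * G)) + r ^ 2 * (3 * G)
          + 3 * (r ^ 2 * G) + Q * P * (3 * (r * G)))
          = G * (P * (6 * (t * r) + 6 * r ^ 2 + 3 * (Q * P) * r)) := by ring
      have h4 := mul_le_mul_of_nonneg_left hcoef hG0
      calc P * |box U z| * (t * r ^ 2) = P * (t * r ^ 2 * |box U z|) := by ring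
        _ ≤ P * (t * (3 * (r * G)) + t * (3 * (r * G)) + r ^ 2 * (3 * G)
            + 3 * (r ^ 2 * G) + Q * P * (3 * (r * G))) := h2
        _ = G * (P * (6 * (t * r) + 6 * r ^ 2 + 3 * (Q * P) * r)) := by ring
        _ ≤ G * (200 * (Q * (t * r ^ 2))) := h4
        _ = 200 * (Q * G) * (t * r ^ 2) := by ring
    have hkey : P * |box U z| ≤ 200 * (Q * G) :=
      le_of_mul_le_mul_right hfin (by positivity)
    rw [div_mul_eq_mul_div, div_le_iff₀ hQ0]
    linarith only [hkey]
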